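/- The values Δ_j given by Δ_j = (Ã+B̃)·(6Ã²C − 3ÃB̃C − (−1)^j √(1 + 6Ã(Ã+B̃)C) − 1) / (18Ã²B̃), j ∈ {1,2}, solve the equilibrium equation of the reduced system: if Ã ≠ 0, B̃ ≠ 0, Ã + B̃ ≠ 0 and 1 + 6Ã(Ã+B̃)C ≥ 0, then with P_j = C + ((Ã−B̃)/(Ã+B̃)) Δ_j one has ( 2Ã(Δ_j − P_j) + B̃(Δ_j + P_j) )² = 2(P_j − Δ_j). -/

import Mathlib

/-- The values `Δ_j = (Ã+B̃)(6Ã²C − 3ÃB̃C − (−1)^j √(1+6Ã(Ã+B̃)C) − 1)/(18Ã²B̃)`,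
`j ∈ {1,2}`, solve the equilibrium equation
`(2Ã(Δ−P) + B̃(Δ+P))² = 2(P−Δ)` of the reduced system, where
`P = C + ((Ã−B̃)/(Ã+B̃))Δ`. -/
theorem reduced_system_equilibria
    (A B C : ℝ) (hA : A ≠ 0) (hB : B ≠ 0) (hAB : A + B ≠ 0)
    (hs : 0 ≤ 1 + 6 * A * (A + B) * C)
    (j : ℕ) (hj : j = 1 ∨ j = 2) :
    let Δ : ℝ := (A + B) *
      (6 * A ^ 2 * C - 3 * A * B * C
        - (-1 : ℝ) ^ j * Real.sqrt (1 + 6 * A * (A + B) * C) - 1) / (18 * A ^ 2 * B)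
    let P : ℝ := C + ((A - B) / (A + B)) * Δ
    (2 * A * (Δ - P) + B * (Δ + P)) ^ 2 = 2 * (P - Δ) := by
  intro Δ P
  obtain ⟨e, hedef, he⟩ : ∃ e : ℝ, (-1 : ℝ) ^ j = e ∧ e ^ 2 = 1 := by
    rcases hj with h | h <;> subst h <;> exact ⟨_, rfl, by norm_num⟩
  obtain ⟨s, hsdef, hsq⟩ : ∃ s : ℝ, Real.sqrt (1 + 6 * A * (A + B) * C) = s ∧
      s ^ 2 = 1 + 6 * A * (A + B) * C := ⟨_, rfl, Real.sq_sqrt hs⟩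
  have hΔ : Δ = (A + B) * (6 * A ^ 2 * C - 3 * A * B * C - e * s - 1) / (18 * A ^ 2 * B) := by
    simp only [Δ, hedef, hsdef]
  have hP : P = C + ((A - B) / (A + B)) * Δ := rfl
  have h1 : 2 * A * (Δ - P) + B * (Δ + P) = -(e * s + 1) / (3 * A) := by
    rw [hP, hΔ]; field_simp; ring
  have h2 : 2 * (P - Δ) = (2 + 6 * A * (A + B) * C + 2 * e * s) / (9 * A ^ 2) := by
    rw [hP, hΔ]; field_simp; ring
  rw [h1, h2]
  have key : (e * s + 1) ^ 2 = 2 + 6 * A * (A + B) * C + 2 * e * s := by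
    linear_combination s ^ 2 * he + hsq
  field_simp
  linear_combination 9 * key
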